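/- Let n ≥ 2 and let λ, μ ∈ ℝ with R := 2nλ + n(n-1)μ > 0. Define the quadratic form Q(h₀, h₁) = 2nλh₀h₁ + n(n-1)μh₁² on ℝ², and let |h|² = h₀² + n h₁². Then Q(h₀,h₁) ≤ (n²λ² + n(λ + (n-1)μ)²)/R · |h|², i.e., the largest eigenvalue of the matrix [[0, √n λ],[√n λ, (n-1)μ]] is at most |Ric|²/R where |Ric|² = n²λ² + n(λ+(n-1)μ)². -/
import Mathlib


/-- The Anderson–Chow type estimate for rotationally invariant tensors: with radial
sectional curvature `λ`, orbital sectional curvature `μ`, scalar curvature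
`R = 2nλ + n(n-1)μ > 0`, the quadratic form `Rm(h,h) = 2nλh₀h₁ + n(n-1)μh₁²` satisfies
`Rm(h,h) ≤ (|Ric|²/R)·|h|²` where `|Ric|² = n²λ² + n(λ+(n-1)μ)²` and `|h|² = h₀² + nh₁²`. -/
theorem stmt7 (n : ℕ) (hn : 2 ≤ n) (l m : ℝ)
    (hR : 0 < 2 * (n : ℝ) * l + (n : ℝ) * ((n : ℝ) - 1) * m) :
    ∀ h₀ h₁ : ℝ,
      2 * (n : ℝ) * l * h₀ * h₁ + (n : ℝ) * ((n : ℝ) - 1) * m * h₁ ^ 2 ≤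
        (((n : ℝ) ^ 2 * l ^ 2 + (n : ℝ) * (l + ((n : ℝ) - 1) * m) ^ 2)
            / (2 * (n : ℝ) * l + (n : ℝ) * ((n : ℝ) - 1) * m))
          * (h₀ ^ 2 + (n : ℝ) * h₁ ^ 2) := by
  intro h₀ h₁
  have hN : (2 : ℝ) ≤ (n : ℝ) := by exact_mod_cast hn
  have hN0 : (0 : ℝ) < (n : ℝ) := by linarith
  set N : ℝ := (n : ℝ) with hNdef
  have hA : 0 < N ^ 2 * l ^ 2 + N * (l + (N - 1) * m) ^ 2 := by
    rcases lt_or_ge 0 (N ^ 2 * l ^ 2 + N * (l + (N - 1) * m) ^ 2) with h | h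
    · exact h
    · exfalso
      have h1 : N ^ 2 * l ^ 2 = 0 ∧ N * (l + (N - 1) * m) ^ 2 = 0 := by
        constructor <;> nlinarith [sq_nonneg (N * l), sq_nonneg (l + (N - 1) * m),
          mul_nonneg hN0.le (sq_nonneg (l + (N - 1) * m))]
      have hl : l = 0 := by
        by_contra hc
        have hl2 : 0 < l ^ 2 := by positivity
        nlinarith [h1.1, mul_pos (mul_pos hN0 hN0) hl2]
      have hm : l + (N - 1) * m = 0 := by
        by_contra hc
        have hm2 : 0 < (l + (N - 1) * m) ^ 2 := by positivity
        nlinarith [h1.2, mul_pos hN0 hm2]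
      nlinarith
  rw [div_mul_eq_mul_div, le_div_iff₀ hR]
  nlinarith [sq_nonneg ((N ^ 2 * l ^ 2 + N * (l + (N - 1) * m) ^ 2) * h₀
      - N * l * (2 * N * l + N * (N - 1) * m) * h₁),
    mul_nonneg hN0.le (sq_nonneg (N * (N - 1) * l * (l - m) * h₁)), hA,
    mul_pos hA hR]
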